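/- Let λ = 1.4737 and θ = 2.8224, and set D = √(4λ² + θ²) and s⋆ = (2/θ)·log((θ + D)/(2λ)). Then 0 < s⋆ < 1 and (2 - 2λ/(θ + D) + λ·(1 - s⋆)) < 0.6867 · (λ + 2 + (exp(-θ)/36)·(72 - 144·exp(θ/6) - 12θ - θ²)). -/

import Mathlib

open Finset

private lemma exp13_lb (x : ℝ) (h1 : 0 ≤ x) :
    ∑ m ∈ Finset.range 13, x ^ m / m.factorial ≤ Real.exp x :=
  Real.sum_le_exp_of_nonneg h1 13

private lemma exp13_ub (x : ℝ) (h1 : 0 ≤ x) (h2 : x ≤ 1) :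
    Real.exp x ≤ (∑ m ∈ Finset.range 13, x ^ m / m.factorial) +
      x ^ 13 * 14 / (6227020800 * 13) := by
  have := Real.exp_bound' h1 h2 (n := 13) (by norm_num)
  norm_num [Nat.factorial] at this ⊢
  linarith

private lemma exp_x1_bounds :
    (1.6006342 : ℝ) < Real.exp 0.4704 ∧ Real.exp 0.4704 < 1.6006344 := by
  have hl := exp13_lb 0.4704 (by norm_num)
  have hu := exp13_ub 0.4704 (by norm_num) (by norm_num)
  simp only [Finset.sum_range_succ, Finset.sum_range_zero, Nat.factorial] at hl hu
  norm_num at hl hu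
  constructor <;> nlinarith

private lemma exp_a1_ub : Real.exp 0.8510648 < 2.34213951 := by
  have hu := exp13_ub 0.8510648 (by norm_num) (by norm_num)
  simp only [Finset.sum_range_succ, Finset.sum_range_zero, Nat.factorial] at hu
  norm_num at hu
  nlinarith

private lemma exp_a2_lb : (2.34213955 : ℝ) < Real.exp 0.8510649 := by
  have hl := exp13_lb 0.8510649 (by norm_num)
  simp only [Finset.sum_range_succ, Finset.sum_range_zero, Nat.factorial] at hl
  norm_num at hl
  nlinarith

set_option maxHeartbeats 1600000 in
/-- Numerical bound for the prophet IID 2-bounded auction instance: at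
`λ = 1.4737`, `θ = 2.8224`, with `D = √(4λ² + θ²)` and
`s⋆ = (2/θ) log((θ + D)/(2λ))`, one has `0 < s⋆ < 1` and
`2 - 2λ/(θ + D) + λ(1 - s⋆) < 0.6867 · (λ + 2 + (e^{-θ}/36)(72 - 144e^{θ/6} - 12θ - θ²))`. -/
theorem stmt_18 (lam θ D s : ℝ) (hlam : lam = 1.4737) (hθ : θ = 2.8224)
    (hD : D = Real.sqrt (4 * lam ^ 2 + θ ^ 2))
    (hs : s = (2 / θ) * Real.log ((θ + D) / (2 * lam))) :
    0 < s ∧ s < 1 ∧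
    2 - 2 * lam / (θ + D) + lam * (1 - s) <
      0.6867 * (lam + 2 + (Real.exp (-θ) / 36) *
        (72 - 144 * Real.exp (θ / 6) - 12 * θ - θ ^ 2)) := by
  subst hlam hθ hD hs
  -- bounds on D
  have hV : (4 * (1.4737:ℝ) ^ 2 + 2.8224 ^ 2) = 16.65310852 := by norm_num
  rw [hV]
  set D := Real.sqrt 16.65310852 with hDdef
  have hD1 : (4.0808220 : ℝ) < D := by
    rw [hDdef]
    rw [show (4.0808220:ℝ) = Real.sqrt (4.0808220^2) from
      (Real.sqrt_sq (by norm_num)).symm]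
    exact Real.sqrt_lt_sqrt (by positivity) (by norm_num)
  have hD2 : D < 4.0808221 := by
    rw [hDdef]
    rw [show (4.0808221:ℝ) = Real.sqrt (4.0808221^2) from
      (Real.sqrt_sq (by norm_num)).symm]
    exact Real.sqrt_lt_sqrt (by positivity) (by norm_num)
  -- bounds on r := (θ + D) / (2λ)
  set r : ℝ := ((2.8224 : ℝ) + D) / (2 * 1.4737) with hr
  have hrpos : 0 < r := by rw [hr]; positivity
  have hr1 : (2.34213951 : ℝ) < r := by
    rw [hr, lt_div_iff₀ (by norm_num : (0:ℝ) < 2 * 1.4737)]; nlinarith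
  have hr2 : r < 2.34213955 := by
    rw [hr, div_lt_iff₀ (by norm_num : (0:ℝ) < 2 * 1.4737)]; nlinarith
  -- bounds on log r
  have hlog1 : (0.8510648 : ℝ) < Real.log r := by
    rw [Real.lt_log_iff_exp_lt hrpos]
    exact lt_trans exp_a1_ub hr1
  have hlog2 : Real.log r < 0.8510649 := by
    rw [Real.log_lt_iff_lt_exp hrpos]
    exact lt_trans hr2 exp_a2_lb
  -- bounds on s
  set s : ℝ := (2 / 2.8224) * Real.log r with hsdef
  have hs1 : (0.603078 : ℝ) < s := by rw [hsdef]; nlinarith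
  have hs2 : s < 0.603079 := by rw [hsdef]; nlinarith
  refine ⟨by linarith, by linarith, ?_⟩
  -- exp bounds
  obtain ⟨he1, he2⟩ := exp_x1_bounds
  have hx6 : ((2.8224 : ℝ)) = (6 : ℕ) * 0.4704 := by norm_num
  have hexp6 : Real.exp 2.8224 = Real.exp 0.4704 ^ 6 := by
    rw [hx6, Real.exp_nat_mul]
  have hdiv6 : ((2.8224 : ℝ) / 6) = 0.4704 := by norm_num
  -- exp(-θ) upper bound
  have hexpθ_lb : (1.6006342 : ℝ)^6 < Real.exp 2.8224 := by
    rw [hexp6]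
    have h0 : (0:ℝ) < 1.6006342 := by norm_num
    gcongr
  have hnegθ_ub : Real.exp (-2.8224) < (0.0594632 : ℝ) := by
    rw [Real.exp_neg]
    have h1 : Real.exp 2.8224 > (0.0594632 : ℝ)⁻¹ := by
      refine lt_trans ?_ hexpθ_lb
      norm_num
    have h2 : (0:ℝ) < Real.exp 2.8224 := Real.exp_pos _
    rw [inv_lt_comm₀ (by positivity) (by norm_num)]
    exact h1
  have hnegθ_pos : (0:ℝ) < Real.exp (-2.8224) := Real.exp_pos _
  -- factor bounds
  have hF1 : (72 : ℝ) - 144 * Real.exp (2.8224 / 6) - 12 * 2.8224 - 2.8224 ^ 2 >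
      72 - 144 * 1.6006344 - 12 * 2.8224 - 2.8224 ^ 2 := by
    rw [hdiv6]; nlinarith
  have hF0 : (72 : ℝ) - 144 * Real.exp (2.8224 / 6) - 12 * 2.8224 - 2.8224 ^ 2 < 0 := by
    rw [hdiv6]; nlinarith
  -- product lower bound
  have hprod : Real.exp (-2.8224) *
      (72 - 144 * Real.exp (2.8224 / 6) - 12 * 2.8224 - 2.8224 ^ 2) >
      (0.0594632 : ℝ) * (72 - 144 * 1.6006344 - 12 * 2.8224 - 2.8224 ^ 2) := by
    nlinarith [mul_pos hnegθ_pos (by linarith :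
        (0:ℝ) < (72 - 144 * Real.exp (2.8224 / 6) - 12 * 2.8224 - 2.8224 ^ 2)
          - (72 - 144 * 1.6006344 - 12 * 2.8224 - 2.8224 ^ 2)),
      mul_pos (by linarith : (0:ℝ) < (0.0594632 : ℝ) - Real.exp (-2.8224))
        (by norm_num : (0:ℝ) < -(72 - 144 * (1.6006344:ℝ) - 12 * 2.8224 - 2.8224 ^ 2))]
  -- LHS fraction bound
  have hfrac : 2 * (1.4737:ℝ) / (2.8224 + 4.0808221) < 2 * 1.4737 / (2.8224 + D) := by
    apply div_lt_div_of_pos_left (by norm_num) (by linarith) (by linarith)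
  -- final assembly
  have hring : (0.6867 : ℝ) * (1.4737 + 2 + Real.exp (-2.8224) / 36 *
      (72 - 144 * Real.exp (2.8224 / 6) - 12 * 2.8224 - 2.8224 ^ 2)) =
      0.6867 * (1.4737 + 2) + 0.6867 / 36 * (Real.exp (-2.8224) *
      (72 - 144 * Real.exp (2.8224 / 6) - 12 * 2.8224 - 2.8224 ^ 2)) := by ring
  rw [hring]
  linarith [hprod, hfrac, hs1]
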